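/- The m×m matrix M with entries M_{00}=1/2, M_{j-1,j}=-α_j and M_{j,j-1}=α_j for 1≤j≤m-1 (where α_j = 1/(8j²-2)), and all other entries zero, is nonsingular. -/

import Mathlib

open Matrix

/-- α_j = 1/(8j²−2). -/
noncomputable def alph (j : ℕ) : ℝ := 1 / (8 * (j : ℝ) ^ 2 - 2)

/-- The m×m tridiagonal matrix M with M₀₀ = 1/2, M_{j-1,j} = −α_j, M_{j,j-1} = α_j. -/
noncomputable def Mmat (m : ℕ) : Matrix (Fin m) (Fin m) ℝ :=
  Matrix.of fun i j =>
    if (i : ℕ) = 0 ∧ (j : ℕ) = 0 then 1 / 2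
    else if (i : ℕ) + 1 = (j : ℕ) then - alph (j : ℕ)
    else if (j : ℕ) + 1 = (i : ℕ) then alph (i : ℕ)
    else 0

/-- The m×m matrix N = e₀ e₀ᵀ. -/
noncomputable def Nmat (m : ℕ) : Matrix (Fin m) (Fin m) ℝ :=
  Matrix.of fun i j => if (i : ℕ) = 0 ∧ (j : ℕ) = 0 then 1 else 0

/-- The vector v: v_j = 2(2j+1) for even j (0 else) when m is odd;
    v_j = −2(2j+1) for odd j (0 else) when m is even. -/
noncomputable def vVec (m : ℕ) : Fin m → ℝ := fun j =>
  if Odd m then (if Even (j : ℕ) then 2 * (2 * (j : ℝ) + 1) else 0)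
  else (if Odd (j : ℕ) then -2 * (2 * (j : ℝ) + 1) else 0)

/-- The standard basis vector e₀. -/
noncomputable def e0vec (m : ℕ) : Fin m → ℝ := fun i => if (i : ℕ) = 0 then 1 else 0

lemma alph_pos (j : ℕ) (hj : 1 ≤ j) : 0 < alph j := by
  have : (1:ℝ) ≤ (j:ℝ) := by exact_mod_cast hj
  have h : (0:ℝ) < 8 * (j:ℝ)^2 - 2 := by nlinarith
  exact div_pos one_pos h

lemma hMN (m : ℕ) : Mmat m + (Mmat m)ᵀ = Nmat m := by
  ext i j
  simp only [Matrix.add_apply, Matrix.transpose_apply, Mmat, Nmat, Matrix.of_apply]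
  split_ifs <;> first | (exfalso; omega) | ring1 | norm_num

lemma row_middle (m k : ℕ) (hk : k + 2 < m) (x : Fin m → ℝ) :
    (Mmat m *ᵥ x) ⟨k+1, by omega⟩ =
      alph (k+1) * x ⟨k, by omega⟩ - alph (k+2) * x ⟨k+2, by omega⟩ := by
  have hf : ∀ j : Fin m, Mmat m ⟨k+1, by omega⟩ j * x j =
      (if j = (⟨k, by omega⟩ : Fin m) then alph (k+1) * x j else 0) +
      (if j = (⟨k+2, by omega⟩ : Fin m) then -alph (k+2) * x j else 0) := by
    intro j
    simp only [Mmat, Matrix.of_apply, Fin.ext_iff, Fin.val_mk]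
    split_ifs <;>
      first
        | (exfalso; omega)
        | ring1
        | (have hj2 : (j:ℕ) = k + 2 := by omega
           rw [hj2]; ring1)
        | (exfalso; simp_all; done)
        | (exfalso; simp_all; omega; done)
  simp only [mulVec, dotProduct, hf, Finset.sum_add_distrib,
    Finset.sum_ite_eq', Finset.mem_univ, if_pos]
  ring1

lemma row_zero (m : ℕ) (hm2 : 2 ≤ m) (x : Fin m → ℝ) :
    (Mmat m *ᵥ x) ⟨0, by omega⟩ =
      (1/2) * x ⟨0, by omega⟩ - alph 1 * x ⟨1, by omega⟩ := by
  have hf : ∀ j : Fin m, Mmat m ⟨0, by omega⟩ j * x j =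
      (if j = (⟨0, by omega⟩ : Fin m) then (1/2) * x j else 0) +
      (if j = (⟨1, by omega⟩ : Fin m) then -alph 1 * x j else 0) := by
    intro j
    simp only [Mmat, Matrix.of_apply, Fin.ext_iff, Fin.val_mk]
    split_ifs <;>
      first
        | (exfalso; omega)
        | ring1
        | (exfalso; simp_all; done)
        | (exfalso; simp_all; omega; done)
        | (have hj1 : (j:ℕ) = 1 := by omega
           rw [hj1]; ring1)
  simp only [mulVec, dotProduct, hf, Finset.sum_add_distrib,
    Finset.sum_ite_eq', Finset.mem_univ, if_pos]
  ring1

/-- the matrix M is nonsingular. -/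
theorem Mmat_nonsingular (m : ℕ) (hm : 1 ≤ m) : IsUnit (Mmat m).det := by
  rw [isUnit_iff_ne_zero]
  intro hdet
  obtain ⟨x, hx0, hx⟩ := Matrix.exists_mulVec_eq_zero_iff.mpr hdet
  have hquad : x ⬝ᵥ (Nmat m *ᵥ x) = 0 := by
    rw [← hMN, add_mulVec, dotProduct_add, hx]
    rw [Matrix.dotProduct_mulVec, Matrix.vecMul_transpose, hx]
    simp
  have hNv : Nmat m *ᵥ x = fun i : Fin m => if (i:ℕ) = 0 then x ⟨0, hm⟩ else 0 := by
    funext i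
    simp only [mulVec, dotProduct, Nmat, Matrix.of_apply]
    rw [Finset.sum_eq_single (⟨0, hm⟩ : Fin m)]
    · by_cases h : (i:ℕ) = 0 <;> simp [h]
    · intro b _ hb
      have hb' : (b:ℕ) ≠ 0 := by simpa [Fin.ext_iff] using hb
      simp [hb']
    · intro h; exact absurd (Finset.mem_univ _) h
  have hNx : x ⬝ᵥ (Nmat m *ᵥ x) = x ⟨0, hm⟩ * x ⟨0, hm⟩ := by
    rw [hNv]
    simp only [dotProduct]
    rw [Finset.sum_eq_single (⟨0, hm⟩ : Fin m)]
    · simp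
    · intro b _ hb
      have hb' : (b:ℕ) ≠ 0 := by simpa [Fin.ext_iff] using hb
      simp [hb']
    · intro h; exact absurd (Finset.mem_univ _) h
  have h0 : x ⟨0, hm⟩ = 0 := mul_self_eq_zero.mp (hNx ▸ hquad)
  have hall : ∀ k, ∀ hk : k < m, x ⟨k, hk⟩ = 0 := by
    intro k
    induction k using Nat.strong_induction_on with
    | _ k ih =>
      intro hk
      match k, hk with
      | 0, hk => exact h0
      | 1, hk =>
        have e := row_zero m (by omega) x
        rw [hx] at e
        have e0 : x ⟨0, by omega⟩ = 0 := h0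
        rw [e0] at e
        simp only [Pi.zero_apply] at e
        have ha := alph_pos 1 le_rfl
        have : alph 1 * x ⟨1, hk⟩ = 0 := by linarith
        rcases mul_eq_zero.mp this with h | h
        · exact absurd h (ne_of_gt ha)
        · exact h
      | (n+2), hk =>
        have e := row_middle m n hk x
        rw [hx] at e
        have en : x ⟨n, by omega⟩ = 0 := ih n (by omega) (by omega)
        rw [en] at e
        simp only [Pi.zero_apply] at e
        have ha := alph_pos (n+2) (by omega)
        have : alph (n+2) * x ⟨n+2, hk⟩ = 0 := by linarith
        rcases mul_eq_zero.mp this with h | h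
        · exact absurd h (ne_of_gt ha)
        · exact h
  exact hx0 (funext fun i => hall i.1 i.2)
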